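/- Let Γ be the set of universal L₀-sentences consisting of: (a) ∀u∀v (R_δ(u,v) → R_ε(v,u)) for all δ < ε; (b) ∀u∀v∀w ((R_ε(u,v) ∧ R_δ(v,w)) → R_η(u,w)) for all ε + δ < η; (c) ∀u R_ε(u,u) for all ε; (d) ∀u∀v (R_δ(u,v) → R_ε(u,v)) for all δ < ε, where δ, ε, η range over positive reals. Then an L₀-structure M is a model of Γ if and only if there exists a semi-metric d on the universe of M such that M is an X-structure for the semi-metric space X = (universe of M, d). In particular, the class of semi-metric structures is universally axiomatizable. -/

import Mathlib

open FirstOrder FirstOrder.Language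
open scoped ENNReal

universe u

/-- A semi-metric on `X`: a map `X × X → [0, ∞]` that is symmetric, satisfies the triangle
inequality, and vanishes on the diagonal. -/
structure SemiMetric (X : Type u) where
  d : X → X → ℝ≥0∞
  symm : ∀ x y, d x y = d y x
  triangle : ∀ x y z, d x z ≤ d x y + d y z
  refl : ∀ x, d x x = 0

/-- The relation symbols of the language of semi-metric structures: one binary relation symbol
`R_ε` for each real `ε > 0`. -/
def metricRel : ℕ → Type
  | 2 => {ε : ℝ // 0 < ε}
  | _ => Empty

/-- The relational language `L₀` of semi-metric structures. -/
def metricLang : FirstOrder.Language.{0, 0} := ⟨fun _ => Empty, metricRel⟩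

/-- The relation symbol `R_ε` of `metricLang`. -/
def Rsym (ε : {ε : ℝ // 0 < ε}) : metricLang.Relations 2 := ε

/-- `M` (an `L₀`-structure on the underlying set of the semi-metric space `X`) is an
`X`-structure: for all `ε > 0` and all `x, y`, `d_X(x,y) < ε` implies `R_ε(x,y)`, and
`R_ε(x,y)` implies `d_X(x,y) ≤ ε`. -/
def IsXStructure (X : Type u) [metricLang.Structure X] (dX : SemiMetric X) : Prop :=
  ∀ (ε : {ε : ℝ // 0 < ε}) (x y : X),
    (dX.d x y < ENNReal.ofReal ε.1 → Structure.RelMap (Rsym ε) ![x, y]) ∧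
    (Structure.RelMap (Rsym ε) ![x, y] → dX.d x y ≤ ENNReal.ofReal ε.1)

/-- The semi-metric `d_M` read off from an `L₀`-structure `M`:
`d_M(x,y) = inf {ε > 0 : M ⊨ R_ε(x,y)}`, equal to `∞` if no `R_ε(x,y)` holds. -/
noncomputable def dM (X : Type u) [metricLang.Structure X] (x y : X) : ℝ≥0∞ :=
  ⨅ (ε : {ε : ℝ // 0 < ε}) (_ : Structure.RelMap (Rsym ε) ![x, y]), ENNReal.ofReal ε.1

/-- The atomic formula `R_ε(v_i, v_j)`. -/
def relBF {n : ℕ} (ε : {ε : ℝ // 0 < ε}) (i j : Fin n) : metricLang.BoundedFormula Empty n :=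
  BoundedFormula.rel (Rsym ε) ![Term.var (Sum.inr i), Term.var (Sum.inr j)]

/-- Axiom (a): `∀u∀v (R_δ(u,v) → R_ε(v,u))`. -/
def sentA (δ ε : {ε : ℝ // 0 < ε}) : metricLang.Sentence :=
  (((relBF δ 0 1).imp (relBF ε 1 0)).all).all

/-- Axiom (b): `∀u∀v∀w ((R_ε(u,v) ∧ R_δ(v,w)) → R_η(u,w))`. -/
def sentB (ε δ η : {ε : ℝ // 0 < ε}) : metricLang.Sentence :=
  ((((relBF ε 0 1 ⊓ relBF δ 1 2).imp (relBF η 0 2)).all).all).all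

/-- Axiom (c): `∀u R_ε(u,u)`. -/
def sentC (ε : {ε : ℝ // 0 < ε}) : metricLang.Sentence :=
  (relBF ε 0 0).all

/-- Axiom (d): `∀u∀v (R_δ(u,v) → R_ε(u,v))`. -/
def sentD (δ ε : {ε : ℝ // 0 < ε}) : metricLang.Sentence :=
  (((relBF δ 0 1).imp (relBF ε 0 1)).all).all

/-- The universal theory `Γ` of semi-metric structures. -/
def Gamma : Set metricLang.Sentence :=
  {φ | ∃ δ ε : {ε : ℝ // 0 < ε}, δ.1 < ε.1 ∧ φ = sentA δ ε} ∪
  {φ | ∃ ε δ η : {ε : ℝ // 0 < ε}, ε.1 + δ.1 < η.1 ∧ φ = sentB ε δ η} ∪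
  {φ | ∃ ε : {ε : ℝ // 0 < ε}, φ = sentC ε} ∪
  {φ | ∃ δ ε : {ε : ℝ // 0 < ε}, δ.1 < ε.1 ∧ φ = sentD δ ε}

/-- A bounded formula is universal if it is a quantifier-free formula preceded by a block of
universal quantifiers. -/
inductive IsUniversalBF {L : FirstOrder.Language.{u, v}} {α : Type w} :
    ∀ {n : ℕ}, L.BoundedFormula α n → Prop
  | of_isQF {n : ℕ} {φ : L.BoundedFormula α n} (h : φ.IsQF) : IsUniversalBF φ
  | all {n : ℕ} {φ : L.BoundedFormula α (n + 1)} (h : IsUniversalBF φ) : IsUniversalBF φ.all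

section Helpers

variable {M : Type u} [metricLang.Structure M]

lemma relBF_isQF {n : ℕ} (ε : {ε : ℝ // 0 < ε}) (i j : Fin n) : (relBF ε i j).IsQF :=
  (BoundedFormula.IsAtomic.rel (Rsym ε) _).isQF

lemma realize_relBF {n} (ε : {ε : ℝ // 0 < ε}) (i j : Fin n) (v : Empty → M) (xs : Fin n → M) :
    (relBF ε i j).Realize v xs ↔ Structure.RelMap (Rsym ε) ![xs i, xs j] := by
  have h : (fun k => Term.realize (L := metricLang) (Sum.elim v xs)
      (![Term.var (Sum.inr i), Term.var (Sum.inr j)] k)) = ![xs i, xs j] := by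
    funext k; fin_cases k <;> rfl
  exact iff_of_eq (congrArg (Structure.RelMap (Rsym ε)) h)

lemma realize_sentA (δ ε : {ε : ℝ // 0 < ε}) :
    Sentence.Realize M (sentA δ ε) ↔
      ∀ u v : M, Structure.RelMap (Rsym δ) ![u, v] → Structure.RelMap (Rsym ε) ![v, u] := by
  simp [sentA, Sentence.Realize, Formula.Realize, realize_relBF, Fin.snoc]

lemma realize_sentB (ε δ η : {ε : ℝ // 0 < ε}) :
    Sentence.Realize M (sentB ε δ η) ↔
      ∀ u v w : M, Structure.RelMap (Rsym ε) ![u, v] → Structure.RelMap (Rsym δ) ![v, w] →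
        Structure.RelMap (Rsym η) ![u, w] := by
  simp [sentB, Sentence.Realize, Formula.Realize, realize_relBF, Fin.snoc]

lemma realize_sentC (ε : {ε : ℝ // 0 < ε}) :
    Sentence.Realize M (sentC ε) ↔ ∀ u : M, Structure.RelMap (Rsym ε) ![u, u] := by
  simp [sentC, Sentence.Realize, Formula.Realize, realize_relBF, Fin.snoc]

lemma realize_sentD (δ ε : {ε : ℝ // 0 < ε}) :
    Sentence.Realize M (sentD δ ε) ↔
      ∀ u v : M, Structure.RelMap (Rsym δ) ![u, v] → Structure.RelMap (Rsym ε) ![u, v] := by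
  simp [sentD, Sentence.Realize, Formula.Realize, realize_relBF, Fin.snoc]

lemma dM_le {ε : {ε : ℝ // 0 < ε}} {x y : M} (h : Structure.RelMap (Rsym ε) ![x, y]) :
    dM M x y ≤ ENNReal.ofReal ε.1 :=
  iInf₂_le ε h

lemma dM_le_of_forall {c : ℝ} (hc : 0 ≤ c) {x y : M}
    (h : ∀ η : {ε : ℝ // 0 < ε}, c < η.1 → Structure.RelMap (Rsym η) ![x, y]) :
    dM M x y ≤ ENNReal.ofReal c := by
  refine ENNReal.le_of_forall_pos_le_add fun r hr _ => ?_
  have hr' : (0 : ℝ) < r := hr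
  have hrel := h ⟨c + r, by linarith⟩ (by simpa using hr')
  calc dM M x y ≤ ENNReal.ofReal (c + r) := dM_le hrel
    _ = ENNReal.ofReal c + r := by
        rw [ENNReal.ofReal_add hc r.coe_nonneg, ENNReal.ofReal_coe_nnreal]

end Helpers

/-- **Proposition 4.2.** `Γ` is a set of universal sentences, and an `L₀`-structure `M` is a
model of `Γ` if and only if there is a semi-metric `d` on the universe of `M` for which `M` is
an `X`-structure, `X = (M, d)`. In particular, the class of semi-metric structures is
universally axiomatizable. -/
theorem gamma_axiomatizes_semimetric_structures :
    (∀ φ ∈ Gamma, IsUniversalBF φ) ∧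
    ∀ (M : Type u) (St : metricLang.Structure M),
      (∀ φ ∈ Gamma, @FirstOrder.Language.Sentence.Realize metricLang M St φ) ↔
        ∃ d : SemiMetric M, @IsXStructure M St d := by
  constructor
  · intro φ hφ
    simp only [Gamma, Set.mem_union, Set.mem_setOf_eq] at hφ
    obtain (((⟨δ, ε, -, rfl⟩ | ⟨ε, δ, η, -, rfl⟩) | ⟨ε, rfl⟩) | ⟨δ, ε, -, rfl⟩) := hφ
    · exact .all (.all (.of_isQF ((relBF_isQF δ 0 1).imp (relBF_isQF ε 1 0))))
    · exact .all (.all (.all (.of_isQF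
        (((relBF_isQF ε 0 1).inf (relBF_isQF δ 1 2)).imp (relBF_isQF η 0 2)))))
    · exact .all (.of_isQF (relBF_isQF ε 0 0))
    · exact .all (.all (.of_isQF ((relBF_isQF δ 0 1).imp (relBF_isQF ε 0 1))))
  · intro M St
    constructor
    · intro hΓ
      have hA : ∀ δ ε : {ε : ℝ // 0 < ε}, δ.1 < ε.1 → ∀ u v : M,
          Structure.RelMap (Rsym δ) ![u, v] → Structure.RelMap (Rsym ε) ![v, u] :=
        fun δ ε h => (realize_sentA δ ε).mp
          (hΓ _ (by simp only [Gamma, Set.mem_union, Set.mem_setOf_eq]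
                    exact Or.inl (Or.inl (Or.inl ⟨δ, ε, h, rfl⟩))))
      have hB : ∀ ε δ η : {ε : ℝ // 0 < ε}, ε.1 + δ.1 < η.1 → ∀ u v w : M,
          Structure.RelMap (Rsym ε) ![u, v] → Structure.RelMap (Rsym δ) ![v, w] →
            Structure.RelMap (Rsym η) ![u, w] :=
        fun ε δ η h => (realize_sentB ε δ η).mp
          (hΓ _ (by simp only [Gamma, Set.mem_union, Set.mem_setOf_eq]
                    exact Or.inl (Or.inl (Or.inr ⟨ε, δ, η, h, rfl⟩))))
      have hC : ∀ (ε : {ε : ℝ // 0 < ε}) (u : M), Structure.RelMap (Rsym ε) ![u, u] :=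
        fun ε => (realize_sentC ε).mp
          (hΓ _ (by simp only [Gamma, Set.mem_union, Set.mem_setOf_eq]
                    exact Or.inl (Or.inr ⟨ε, rfl⟩)))
      have hD : ∀ δ ε : {ε : ℝ // 0 < ε}, δ.1 < ε.1 → ∀ u v : M,
          Structure.RelMap (Rsym δ) ![u, v] → Structure.RelMap (Rsym ε) ![u, v] :=
        fun δ ε h => (realize_sentD δ ε).mp
          (hΓ _ (by simp only [Gamma, Set.mem_union, Set.mem_setOf_eq]
                    exact Or.inr ⟨δ, ε, h, rfl⟩))
      refine ⟨⟨dM M, ?_, ?_, ?_⟩, ?_⟩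
      · -- symmetry
        have key : ∀ x y : M, dM M y x ≤ dM M x y := by
          intro x y
          rw [show dM M x y = ⨅ (ε : {ε : ℝ // 0 < ε})
              (_ : Structure.RelMap (Rsym ε) ![x, y]), ENNReal.ofReal ε.1 from rfl]
          refine le_iInf₂ fun δ hδ => dM_le_of_forall δ.2.le fun η hη => ?_
          exact hA δ η hη x y hδ
        exact fun x y => le_antisymm (key y x) (key x y)
      · -- triangle
        intro x y z
        have key : ∀ ε δ : {ε : ℝ // 0 < ε},
            Structure.RelMap (Rsym ε) ![x, y] → Structure.RelMap (Rsym δ) ![y, z] →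
            dM M x z ≤ ENNReal.ofReal ε.1 + ENNReal.ofReal δ.1 := by
          intro ε δ h1 h2
          rw [← ENNReal.ofReal_add ε.2.le δ.2.le]
          exact dM_le_of_forall (by have := ε.2; have := δ.2; linarith) fun η hη => hB ε δ η hη x y z h1 h2
        have heq : dM M x y + dM M y z = ⨅ (ε : {ε : ℝ // 0 < ε})
            (_ : Structure.RelMap (Rsym ε) ![x, y]) (δ : {ε : ℝ // 0 < ε})
            (_ : Structure.RelMap (Rsym δ) ![y, z]),
            (ENNReal.ofReal ε.1 + ENNReal.ofReal δ.1) := by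
          simp only [dM, ENNReal.iInf_add, ENNReal.add_iInf]
          apply le_antisymm
          · exact le_iInf₂ fun ε h1 => le_iInf₂ fun δ h2 =>
              iInf₂_le_of_le δ h2 (iInf₂_le ε h1)
          · exact le_iInf₂ fun δ h2 => le_iInf₂ fun ε h1 =>
              iInf₂_le_of_le ε h1 (iInf₂_le δ h2)
        rw [heq]
        exact le_iInf₂ fun ε h1 => le_iInf₂ fun δ h2 => key ε δ h1 h2
      · -- refl
        intro x
        refine le_antisymm ?_ (zero_le)
        simpa using dM_le_of_forall le_rfl fun η _ => hC η x
      · -- X-structure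
        intro ε x y
        constructor
        · intro h
          have h' : (⨅ (δ : {ε : ℝ // 0 < ε})
              (_ : Structure.RelMap (Rsym δ) ![x, y]), ENNReal.ofReal δ.1)
                < ENNReal.ofReal ε.1 := h
          simp only [iInf_lt_iff] at h'
          obtain ⟨δ, hrel, hlt⟩ := h'
          exact hD δ ε ((ENNReal.ofReal_lt_ofReal_iff ε.2).mp hlt) x y hrel
        · exact dM_le
    · rintro ⟨d, hX⟩ φ hφ
      simp only [Gamma, Set.mem_union, Set.mem_setOf_eq] at hφ
      obtain (((⟨δ, ε, hlt, rfl⟩ | ⟨ε, δ, η, hlt, rfl⟩) | ⟨ε, rfl⟩) | ⟨δ, ε, hlt, rfl⟩) := hφ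
      · rw [realize_sentA]
        intro u v h
        refine (hX ε v u).1 ?_
        calc d.d v u = d.d u v := d.symm v u
          _ ≤ ENNReal.ofReal δ.1 := (hX δ u v).2 h
          _ < ENNReal.ofReal ε.1 := (ENNReal.ofReal_lt_ofReal_iff ε.2).mpr hlt
      · rw [realize_sentB]
        intro u v w h1 h2
        refine (hX η u w).1 ?_
        calc d.d u w ≤ d.d u v + d.d v w := d.triangle u v w
          _ ≤ ENNReal.ofReal ε.1 + ENNReal.ofReal δ.1 :=
              add_le_add ((hX ε u v).2 h1) ((hX δ v w).2 h2)
          _ = ENNReal.ofReal (ε.1 + δ.1) := (ENNReal.ofReal_add ε.2.le δ.2.le).symm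
          _ < ENNReal.ofReal η.1 := (ENNReal.ofReal_lt_ofReal_iff η.2).mpr hlt
      · rw [realize_sentC]
        intro u
        refine (hX ε u u).1 ?_
        rw [d.refl]
        exact ENNReal.ofReal_pos.mpr ε.2
      · rw [realize_sentD]
        intro u v h
        refine (hX ε u v).1 ?_
        calc d.d u v ≤ ENNReal.ofReal δ.1 := (hX δ u v).2 h
          _ < ENNReal.ofReal ε.1 := (ENNReal.ofReal_lt_ofReal_iff ε.2).mpr hlt
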